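/- arXiv:2202.12380 — 4 statements merged into one kernel-verified Lean document; each statement's English description precedes it below -/
import Mathlib

section
/- For every k ≥ 0, the residual of the approximate coefficient-domain matching pursuit with resets satisfies ‖r_{k+1}‖₂² ≤ (1 − q)·‖r_k‖₂², where q = ϵ'·(1+δ)^{−2}·λ_min; i.e., the residual energy decays exponentially in the number of selection steps. -/
open scoped BigOperators
open ComplexConjugate

/-- The inner product `⟨u,v⟩ = ∑ l, u l * conj (v l)`. -/
noncomputable def cip {L : ℕ} (u v : Fin L → ℂ) : ℂ := ∑ l, u l * conj (v l)

/-- The Euclidean norm `‖u‖₂ = √(∑ l, |u l|²)`. -/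
noncomputable def nrm {L : ℕ} (u : Fin L → ℂ) : ℝ := Real.sqrt (∑ l, ‖u l‖ ^ 2)


section Aux
variable {L : ℕ}

lemma nrm_nonneg (u : Fin L → ℂ) : 0 ≤ nrm u := Real.sqrt_nonneg _

lemma nrm_sq (u : Fin L → ℂ) : nrm u ^ 2 = ∑ l, ‖u l‖ ^ 2 := by
  rw [nrm, Real.sq_sqrt]; positivity

lemma cip_sub (u v w : Fin L → ℂ) : cip (u - v) w = cip u w - cip v w := by
  simp [cip, sub_mul, Finset.sum_sub_distrib]

lemma cip_smul (c : ℂ) (u w : Fin L → ℂ) : cip (c • u) w = c * cip u w := by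
  simp [cip, Finset.mul_sum, mul_assoc]

lemma cip_zero (w : Fin L → ℂ) : cip (0 : Fin L → ℂ) w = 0 := by simp [cip]

lemma abs_sq_sub (z w : ℂ) : ‖z - w‖ ^ 2
    = ‖z‖ ^ 2 - 2 * (z * conj w).re + ‖w‖ ^ 2 := by
  simp only [Complex.sq_norm, Complex.normSq_apply, Complex.sub_re, Complex.sub_im,
    Complex.mul_re, Complex.conj_re, Complex.conj_im]
  ring

lemma energy (u d : Fin L → ℂ) (hd : nrm d = 1) (c : ℂ) :
    nrm (u - c • d) ^ 2 = nrm u ^ 2 - ‖cip u d‖ ^ 2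
      + ‖c - cip u d‖ ^ 2 := by
  have hds : (∑ l, ‖d l‖ ^ 2) = 1 := by
    have := nrm_sq d; rw [hd] at this; linarith [this.symm]
  have expand : ∀ l, ‖u l - c * d l‖ ^ 2 =
      ‖u l‖ ^ 2 - 2 * ((conj c * (u l * conj (d l))).re)
        + ‖c‖ ^ 2 * ‖d l‖ ^ 2 := by
    intro l
    rw [show u l - c * d l = u l - (c * d l) by ring, abs_sq_sub]
    rw [norm_mul, mul_pow]
    congr 2
    rw [map_mul]
    ring_nf
  have h1 : nrm (u - c • d) ^ 2 = ∑ l, ‖u l - c * d l‖ ^ 2 := by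
    rw [nrm_sq]; simp [Pi.sub_apply, Pi.smul_apply, smul_eq_mul]
  have h2 : (∑ x, ‖c‖ ^ 2 * ‖d x‖ ^ 2) = ‖c‖ ^ 2 := by
    rw [← Finset.mul_sum, hds, mul_one]
  have hre : (∑ i, ((starRingEnd ℂ) c * (u i * (starRingEnd ℂ) (d i))).re)
      = (c * conj (cip u d)).re := by
    rw [← Complex.re_sum, ← Finset.mul_sum, ← cip]
    rw [show c * conj (cip u d) = conj (conj c * cip u d) by simp [mul_comm], Complex.conj_re]
  rw [h1]
  simp only [expand]
  rw [Finset.sum_add_distrib, Finset.sum_sub_distrib, h2, ← Finset.mul_sum, hre, ← nrm_sq, abs_sq_sub]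
  ring

lemma nrm_smul (c : ℂ) (u : Fin L → ℂ) : nrm (c • u) = ‖c‖ * nrm u := by
  have h : (∑ l, ‖c * u l‖ ^ 2) = ‖c‖ ^ 2 * ∑ l, ‖u l‖ ^ 2 := by
    rw [Finset.mul_sum]; congr 1; funext l; rw [norm_mul, mul_pow]
  rw [nrm, nrm]
  simp only [Pi.smul_apply, smul_eq_mul]
  rw [h, Real.sqrt_mul (by positivity), Real.sqrt_sq (norm_nonneg c)]

lemma mulVec_single_fun {P : ℕ} (D : Matrix (Fin L) (Fin P) ℂ) (j : Fin P) (a : ℂ) :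
    D.mulVec (Pi.single j a) = a • (fun l => D l j) := by
  funext l
  simp [Matrix.mulVec, dotProduct, Pi.single_apply, mul_comm]

lemma lam_low {P : ℕ} (hP : 0 < P) (D : Matrix (Fin L) (Fin P) ℂ) (lammin : ℝ)
    (hlam : lammin = ⨅ y : {y : Fin L → ℂ // nrm y = 1},
      ⨆ i : Fin P, ‖cip (y : Fin L → ℂ) (fun l => D l i)‖ ^ 2)
    (y : Fin L → ℂ) :
    ∃ i, lammin * nrm y ^ 2 ≤ ‖cip y (fun l => D l i)‖ ^ 2 := by
  haveI : Nonempty (Fin P) := ⟨⟨0, hP⟩⟩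
  by_cases hy : nrm y = 0
  · obtain ⟨i⟩ := (inferInstance : Nonempty (Fin P))
    refine ⟨i, ?_⟩
    rw [hy]
    simpa using sq_nonneg (‖cip y (fun l => D l i)‖)
  · have hy0 : 0 < nrm y := lt_of_le_of_ne (nrm_nonneg y) (Ne.symm hy)
    set t : ℝ := nrm y with ht
    set z : Fin L → ℂ := ((t : ℂ))⁻¹ • y with hzdef
    have hz : nrm z = 1 := by
      rw [hzdef, nrm_smul, norm_inv, Complex.norm_real, Real.norm_eq_abs, abs_of_pos hy0, ← ht,
        inv_mul_cancel₀ hy0.ne']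
    have hbdd : BddBelow (Set.range fun y : {y : Fin L → ℂ // nrm y = 1} =>
        ⨆ i : Fin P, ‖cip (y : Fin L → ℂ) (fun l => D l i)‖ ^ 2) := by
      refine ⟨0, ?_⟩
      rintro b ⟨w, rfl⟩
      exact Real.iSup_nonneg fun i => sq_nonneg _
    have h1 : lammin ≤ ⨆ i : Fin P, ‖cip z (fun l => D l i)‖ ^ 2 := by
      rw [hlam]
      exact ciInf_le hbdd ⟨z, hz⟩
    obtain ⟨i0, hi0⟩ := Finite.exists_max
      (fun i : Fin P => ‖cip z (fun l => D l i)‖ ^ 2)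
    have h2 : lammin ≤ ‖cip z (fun l => D l i0)‖ ^ 2 :=
      h1.trans (ciSup_le hi0)
    have hzi : ‖cip z (fun l => D l i0)‖ ^ 2
        = (t⁻¹) ^ 2 * ‖cip y (fun l => D l i0)‖ ^ 2 := by
      rw [hzdef, cip_smul, norm_mul, norm_inv, Complex.norm_real, Real.norm_eq_abs, abs_of_pos hy0, mul_pow]
    refine ⟨i0, ?_⟩
    rw [hzi] at h2
    have h3 := mul_le_mul_of_nonneg_right h2 (sq_nonneg t)
    have h4 : (t⁻¹) ^ 2 * ‖cip y (fun l => D l i0)‖ ^ 2 * t ^ 2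
        = ‖cip y (fun l => D l i0)‖ ^ 2 := by
      field_simp
    rw [h4] at h3
    exact h3

end Aux

/-- Theorem 2 of the paper: approximate coefficient-domain matching
pursuit with resets contracts the residual energy exponentially:
`‖r_{k+1}‖₂² ≤ (1 − q)·‖r_k‖₂²` for every `k ≥ 0`, where
`q = ϵ'·(1+δ)⁻²·λ_min`.

Here `cpre k`, `ppre (k+1)`, `koutpre k` denote the pre-reset quantities `ĉ_k`, `p_{k+1}`,
`k°_k` at step `k`, `R k` is the reset criterion evaluated on them, and `chat k`,
`p (k+1)`, `kout k` are the corresponding effective (post-reset) quantities used in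
the update. -/

theorem approx_cdmp_with_resets_exponential_decay
    {L P : ℕ} (hL : 0 < L) (hP : 0 < P)
    (x : Fin L → ℂ) (D : Matrix (Fin L) (Fin P) ℂ)
    (hDnorm : ∀ i, nrm (fun l => D l i) = 1)
    (hspan : Submodule.span ℂ (Set.range fun i => (fun l => D l i)) = ⊤)
    (lammin : ℝ)
    (hlam : lammin = ⨅ y : {y : Fin L → ℂ // nrm y = 1},
      ⨆ i : Fin P, ‖cip (y : Fin L → ℂ) (fun l => D l i)‖ ^ 2)
    (ε δ ϵ' q : ℝ)
    (hε0 : 0 < ε) (hε1 : ε < 1)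
    (hδ0 : 0 < δ) (hδ : δ < 1 / 2)
    (hϵ'0 : 0 < ϵ') (hϵ' : ϵ' < 1 - 2 * δ)
    (hconstr : 2 * δ / (1 - (2 * δ + ϵ')) < Real.sqrt lammin)
    (hq : q = ϵ' / (1 + δ) ^ 2 * lammin)
    (G Gε : Matrix (Fin P) (Fin P) ℂ)
    (hG : ∀ i j, G i j = cip (fun l => D l j) (fun l => D l i))
    (hGε : ∀ i j, Gε i j = if ε < ‖G i j‖ then G i j else 0)
    (c cpre chat : ℕ → Fin P → ℂ) (ppre p : ℕ → Fin P) (koutpre kout : ℕ → ℕ)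
    (r : ℕ → Fin L → ℂ) (hr : ∀ k, r k = x - D.mulVec (c k))
    (S : ℕ → ℝ)
    (hS : ∀ k, S k = ∑ l ∈ Finset.Icc (koutpre k + 1) k, ‖chat (l - 1) (p l)‖)
    (R : ℕ → Prop)
    (hR : ∀ k, R k ↔
      (‖cpre k (ppre (k + 1))‖ < ε / δ * S k ∨
        ‖cpre k (ppre (k + 1))‖ <
          2 * δ * (1 - q) ^ (((koutpre k : ℝ) - (k : ℝ)) / 2) / (1 - (2 * δ + ϵ')) *
            nrm (r (koutpre k))))
    (hc0 : c 0 = 0)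
    (hcpre0 : ∀ i, cpre 0 i = cip x (fun l => D l i))
    (hkoutpre0 : koutpre 0 = 0)
    (hppre : ∀ k i, ‖cpre k i‖ ≤ ‖cpre k (ppre (k + 1))‖)
    (hresetT : ∀ k, R k → (chat k = fun i => cip (r k) (fun l => D l i)) ∧ kout k = k)
    (hresetF : ∀ k, ¬ R k → chat k = cpre k ∧ p (k + 1) = ppre (k + 1) ∧ kout k = koutpre k)
    (hp : ∀ k i, ‖chat k i‖ ≤ ‖chat k (p (k + 1))‖)
    (hcrec : ∀ k, c (k + 1) = c k + Pi.single (p (k + 1)) (chat k (p (k + 1))))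
    (hcprerec : ∀ k, cpre (k + 1) = fun i => chat k i - chat k (p (k + 1)) * Gε i (p (k + 1)))
    (hkoutrec : ∀ k, koutpre (k + 1) = kout k) :
    ∀ k, nrm (r (k + 1)) ^ 2 ≤ (1 - q) * nrm (r k) ^ 2 := by
  haveI : Nonempty (Fin P) := ⟨⟨0, hP⟩⟩
  have hden : (0:ℝ) < 1 - (2 * δ + ϵ') := by linarith
  have hlampos : 0 < lammin := by
    have h1 : 0 < 2 * δ / (1 - (2 * δ + ϵ')) := div_pos (by linarith) hden
    exact Real.sqrt_pos.mp (h1.trans hconstr)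
  have hqle : q ≤ lammin := by
    rw [hq]
    have h1 : ϵ' / (1 + δ) ^ 2 ≤ 1 := by
      rw [div_le_one (by positivity)]
      nlinarith
    exact mul_le_of_le_one_left hlampos.le h1
  have hGdiff : ∀ i j, ‖G i j - Gε i j‖ ≤ ε := by
    intro i j
    rw [hGε]
    split
    · simpa using hε0.le
    · next h => simpa using not_lt.mp h
  have hrrec : ∀ k, r (k + 1) = r k - chat k (p (k + 1)) • (fun l => D l (p (k + 1))) := by
    intro k
    rw [hr, hr, hcrec, Matrix.mulVec_add, mulVec_single_fun, sub_add_eq_sub_sub]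
  have hciprec : ∀ k i, cip (r (k + 1)) (fun l => D l i)
      = cip (r k) (fun l => D l i) - chat k (p (k + 1)) * G i (p (k + 1)) := by
    intro k i
    rw [hrrec k, cip_sub, cip_smul, ← hG]
  have hS0 : S 0 = 0 := by rw [hS, hkoutpre0]; simp
  have hr0 : r 0 = x := by rw [hr, hc0, Matrix.mulVec_zero, sub_zero]
  have inv : ∀ k, koutpre k ≤ k ∧
      ∀ i, ‖cpre k i - cip (r k) (fun l => D l i)‖ ≤ ε * S k := by
    intro k
    induction k with
    | zero =>
      refine ⟨hkoutpre0.le, fun i => ?_⟩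
      rw [hS0, hr0, hcpre0 i]
      simp
    | succ k ih =>
      obtain ⟨ihk, ihE⟩ := ih
      by_cases hRk : R k
      · obtain ⟨hch, hko⟩ := hresetT k hRk
        have hk1 : koutpre (k + 1) = k := by rw [hkoutrec, hko]
        have hS1 : S (k + 1) = ‖chat k (p (k + 1))‖ := by
          rw [hS, hk1, Finset.Icc_self, Finset.sum_singleton, Nat.add_sub_cancel]
        refine ⟨by omega, fun i => ?_⟩
        have e1 : cpre (k + 1) i - cip (r (k + 1)) (fun l => D l i)
            = chat k (p (k + 1)) * (G i (p (k + 1)) - Gε i (p (k + 1))) := by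
          simp only [hcprerec, hciprec, hch]
          ring
        rw [e1, norm_mul]
        calc ‖chat k (p (k + 1))‖
              * ‖G i (p (k + 1)) - Gε i (p (k + 1))‖
            ≤ ‖chat k (p (k + 1))‖ * ε :=
              mul_le_mul_of_nonneg_left (hGdiff _ _) (norm_nonneg _)
          _ = ε * S (k + 1) := by rw [hS1]; ring
      · obtain ⟨hch, hpp, hko⟩ := hresetF k hRk
        have hk1 : koutpre (k + 1) = koutpre k := by rw [hkoutrec, hko]
        have hS1 : S (k + 1) = S k + ‖chat k (p (k + 1))‖ := by
          rw [hS, hk1, Finset.sum_Icc_succ_top (by omega : koutpre k + 1 ≤ k + 1),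
            ← hS, Nat.add_sub_cancel]
        refine ⟨by omega, fun i => ?_⟩
        have e1 : cpre (k + 1) i - cip (r (k + 1)) (fun l => D l i)
            = (cpre k i - cip (r k) (fun l => D l i))
              + chat k (p (k + 1)) * (G i (p (k + 1)) - Gε i (p (k + 1))) := by
          simp only [hcprerec, hciprec, hch]
          ring
        rw [e1]
        calc ‖(cpre k i - cip (r k) (fun l => D l i))
              + chat k (p (k + 1)) * (G i (p (k + 1)) - Gε i (p (k + 1)))‖
            ≤ ‖cpre k i - cip (r k) (fun l => D l i)‖
              + ‖chat k (p (k + 1)) * (G i (p (k + 1)) - Gε i (p (k + 1)))‖ :=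
              norm_add_le _ _
          _ ≤ ε * S k + ‖chat k (p (k + 1))‖ * ε := by
              refine add_le_add (ihE i) ?_
              rw [norm_mul]
              exact mul_le_mul_of_nonneg_left (hGdiff _ _) (norm_nonneg _)
          _ = ε * S (k + 1) := by rw [hS1]; ring
  intro k
  obtain ⟨hkk, hinv⟩ := inv k
  have henergy := energy (r k) (fun l => D l (p (k + 1))) (hDnorm _) (chat k (p (k + 1)))
  rw [← hrrec k] at henergy
  by_cases hRk : R k
  · obtain ⟨hch, hko⟩ := hresetT k hRk
    have hBz : chat k (p (k + 1)) - cip (r k) (fun l => D l (p (k + 1))) = 0 := by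
      rw [hch]; simp
    rw [hBz] at henergy
    simp only [norm_zero] at henergy
    obtain ⟨i0, hi0⟩ := lam_low hP D lammin hlam (r k)
    have t := hp k i0
    simp only [hch] at t
    have t2 : ‖cip (r k) (fun l => D l i0)‖ ^ 2
        ≤ ‖cip (r k) (fun l => D l (p (k + 1)))‖ ^ 2 :=
      pow_le_pow_left₀ (norm_nonneg _) t 2
    have hqN : q * nrm (r k) ^ 2 ≤ lammin * nrm (r k) ^ 2 :=
      mul_le_mul_of_nonneg_right hqle (sq_nonneg _)
    linarith [henergy, hi0, t2, hqN]
  · obtain ⟨hch, hpp, hko⟩ := hresetF k hRk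
    rw [hR] at hRk
    push_neg at hRk
    obtain ⟨h1, _⟩ := hRk
    have hchp : chat k (p (k + 1)) = cpre k (ppre (k + 1)) := by rw [hch, hpp]
    rw [← hchp] at h1
    have hεS : ε * S k ≤ δ * ‖chat k (p (k + 1))‖ := by
      rw [div_mul_eq_mul_div, div_le_iff₀ hδ0] at h1
      linarith
    set A := ‖cip (r k) (fun l => D l (p (k + 1)))‖ with hA
    set B := ‖chat k (p (k + 1)) - cip (r k) (fun l => D l (p (k + 1)))‖ with hBdef
    set C := ‖chat k (p (k + 1))‖ with hC
    set N := nrm (r k) with hN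
    have hA0 : 0 ≤ A := norm_nonneg _
    have hB0 : 0 ≤ B := norm_nonneg _
    have hC0 : 0 ≤ C := norm_nonneg _
    have hB : B ≤ δ * C := by
      have hE := hinv (p (k + 1))
      rw [← hch] at hE
      exact le_trans hE hεS
    have htri : C ≤ A + B := by
      have := norm_add_le
        (chat k (p (k + 1)) - cip (r k) (fun l => D l (p (k + 1))))
        (cip (r k) (fun l => D l (p (k + 1))))
      simpa [hA, hBdef, hC, add_comm] using this
    obtain ⟨i0, hi0⟩ := lam_low hP D lammin hlam (r k)
    have h6 : ‖cip (r k) (fun l => D l i0)‖ ≤ (1 + δ) * C := by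
      have t1 := hinv i0
      have t2 : ‖cpre k i0‖ ≤ C := by
        rw [hC, hchp]
        exact hppre k i0
      have t3 : ‖cip (r k) (fun l => D l i0)‖
          ≤ ‖cpre k i0‖ + ‖cpre k i0 - cip (r k) (fun l => D l i0)‖ := by
        have h := norm_add_le (cpre k i0 - cip (r k) (fun l => D l i0))
          (- cpre k i0)
        have h2 : ‖(cpre k i0 - cip (r k) (fun l => D l i0)) + (- cpre k i0)‖
            = ‖cip (r k) (fun l => D l i0)‖ := by
          rw [show (cpre k i0 - cip (r k) (fun l => D l i0)) + (- cpre k i0)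
            = - cip (r k) (fun l => D l i0) by ring, norm_neg]
        rw [h2, norm_neg] at h
        linarith
      have t4 : ‖cpre k i0 - cip (r k) (fun l => D l i0)‖ ≤ δ * C :=
        le_trans t1 hεS
      calc ‖cip (r k) (fun l => D l i0)‖
          ≤ ‖cpre k i0‖ + δ * C := by linarith
        _ ≤ C + δ * C := by linarith [t2]
        _ = (1 + δ) * C := by ring
    clear_value A B C N
    have hC2 : lammin * N ^ 2 ≤ (1 + δ) ^ 2 * C ^ 2 := by
      have h7 := pow_le_pow_left₀ (norm_nonneg _) h6 2
      rw [mul_pow] at h7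
      rw [hN]
      linarith [hi0]
    have hqN : q * N ^ 2 ≤ ϵ' * C ^ 2 := by
      rw [hq, mul_assoc]
      have step1 : ϵ' / (1 + δ) ^ 2 * (lammin * N ^ 2)
          ≤ ϵ' / (1 + δ) ^ 2 * ((1 + δ) ^ 2 * C ^ 2) :=
        mul_le_mul_of_nonneg_left hC2 (by positivity)
      have step2 : ϵ' / (1 + δ) ^ 2 * ((1 + δ) ^ 2 * C ^ 2) = ϵ' * C ^ 2 := by
        field_simp
      linarith
    have e2 : 0 ≤ C - B := by
      have hd1 : δ * C ≤ 1 * C := mul_le_mul_of_nonneg_right (by linarith) hC0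
      linarith
    have hfin : ϵ' * C ^ 2 ≤ A ^ 2 - B ^ 2 := by
      have e1 : 0 ≤ A - (C - B) := by linarith
      have e3 : 0 ≤ A + (C - B) := by linarith
      have q1 : 0 ≤ (A - (C - B)) * (A + (C - B)) := mul_nonneg e1 e3
      have q2 : (A - (C - B)) * (A + (C - B)) = A ^ 2 - (C ^ 2 - 2 * (B * C) + B ^ 2) := by
        ring
      have q3 : B * C ≤ δ * C * C := mul_le_mul_of_nonneg_right hB hC0
      have q4 : 0 ≤ (1 - 2 * δ - ϵ') * (C * C) :=
        mul_nonneg (by linarith) (mul_nonneg hC0 hC0)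
      have q5 : C ^ 2 = C * C := sq C
      linarith [q1, q2, q3, q4, q5]
    linarith [henergy, hqN, hfin]
end

section
/- For every k ≥ 0 and every index p, the truncation error of the Gram matrix applied to the current solution is controlled by the accumulated selected coefficient magnitudes: |((G − G_ε)·c_k)(p)| ≤ ε·Σ_k. -/
open scoped BigOperators
open ComplexConjugate

/-- in approximate coefficient-domain matching pursuit, the truncation
error of the Gram matrix applied to the current solution is controlled by the accumulated
selected coefficient magnitudes: `|((G − G_ε)·c_k)(p)| ≤ ε·Σ_k`. -/
theorem approx_cdmp_truncation_error_bound
    {L P : ℕ} (hL : 0 < L) (hP : 0 < P)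
    (x : Fin L → ℂ) (D : Matrix (Fin L) (Fin P) ℂ)
    (hDnorm : ∀ q, nrm (fun l => D l q) = 1)
    (ε : ℝ) (hε : 0 < ε)
    (G Gε : Matrix (Fin P) (Fin P) ℂ)
    (hG : ∀ i j, G i j = cip (fun l => D l j) (fun l => D l i))
    (hGε : ∀ i j, Gε i j = if ε < ‖G i j‖ then G i j else 0)
    (c chat : ℕ → Fin P → ℂ) (p : ℕ → Fin P)
    (hc0 : c 0 = 0)
    (hchat0 : ∀ i, chat 0 i = cip x (fun l => D l i))
    (hp : ∀ k i, ‖chat k i‖ ≤ ‖chat k (p (k + 1))‖)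
    (hchatrec : ∀ k, chat (k + 1) = fun i => chat k i - chat k (p (k + 1)) * Gε i (p (k + 1)))
    (hcrec : ∀ k, c (k + 1) = c k + Pi.single (p (k + 1)) (chat k (p (k + 1))))
    (r : ℕ → Fin L → ℂ) (hr : ∀ k, r k = x - D.mulVec (c k))
    (S : ℕ → ℝ)
    (hS : ∀ k, S k = ∑ l ∈ Finset.range k, ‖chat l (p (l + 1))‖) :
    ∀ k i, ‖(G - Gε).mulVec (c k) i‖ ≤ ε * S k := by
  -- entrywise bound on the truncation error matrix
  have hentry : ∀ i j, ‖(G - Gε) i j‖ ≤ ε := by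
    intro i j
    simp only [Matrix.sub_apply, hGε]
    split_ifs with h
    · simpa using le_of_lt hε
    · simpa using le_of_not_gt h
  intro k i
  induction k with
  | zero =>
    simp [hc0, hS, Matrix.mulVec]
  | succ k ih =>
    have hmul : (G - Gε).mulVec (c (k + 1)) i
        = (G - Gε).mulVec (c k) i
          + (G - Gε) i (p (k + 1)) * chat k (p (k + 1)) := by
      rw [hcrec k, Matrix.mulVec_add]
      congr 1
      simp [Matrix.mulVec, dotProduct, Pi.single_apply, mul_comm]
    rw [hmul]
    calc ‖(G - Gε).mulVec (c k) i
            + (G - Gε) i (p (k + 1)) * chat k (p (k + 1))‖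
        ≤ ‖(G - Gε).mulVec (c k) i‖
          + ‖(G - Gε) i (p (k + 1))‖ * ‖chat k (p (k + 1))‖ := by
          refine le_trans (norm_add_le _ _) ?_
          rw [norm_mul]
      _ ≤ ε * S k + ε * ‖chat k (p (k + 1))‖ := by
          gcongr
          exact hentry _ _
      _ = ε * S (k + 1) := by
          rw [hS, hS, Finset.sum_range_succ]; ring
end

section
/- For every k ≥ 0 and every index p, the coefficient-domain residual estimate of approximate coefficient-domain matching pursuit deviates from the true analysis coefficients of the residual by at most the accumulated truncation error: |⟨r_k, d_p⟩ − ĉ_k(p)| ≤ ε·Σ_k. -/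
open scoped BigOperators
open ComplexConjugate

/-- in approximate coefficient-domain matching pursuit, the
coefficient-domain residual estimate deviates from the true analysis coefficients
of the residual by at most the accumulated truncation error:
`|⟨r_k, d_p⟩ − ĉ_k(p)| ≤ ε·Σ_k`. -/
theorem approx_cdmp_residual_deviation_bound
    {L P : ℕ} (hL : 0 < L) (hP : 0 < P)
    (x : Fin L → ℂ) (D : Matrix (Fin L) (Fin P) ℂ)
    (hDnorm : ∀ q, nrm (fun l => D l q) = 1)
    (ε : ℝ) (hε : 0 < ε)
    (G Gε : Matrix (Fin P) (Fin P) ℂ)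
    (hG : ∀ i j, G i j = cip (fun l => D l j) (fun l => D l i))
    (hGε : ∀ i j, Gε i j = if ε < ‖G i j‖ then G i j else 0)
    (c chat : ℕ → Fin P → ℂ) (p : ℕ → Fin P)
    (hc0 : c 0 = 0)
    (hchat0 : ∀ i, chat 0 i = cip x (fun l => D l i))
    (hp : ∀ k i, ‖chat k i‖ ≤ ‖chat k (p (k + 1))‖)
    (hchatrec : ∀ k, chat (k + 1) = fun i => chat k i - chat k (p (k + 1)) * Gε i (p (k + 1)))
    (hcrec : ∀ k, c (k + 1) = c k + Pi.single (p (k + 1)) (chat k (p (k + 1))))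
    (r : ℕ → Fin L → ℂ) (hr : ∀ k, r k = x - D.mulVec (c k))
    (S : ℕ → ℝ)
    (hS : ∀ k, S k = ∑ l ∈ Finset.range k, ‖chat l (p (l + 1))‖) :
    ∀ k i, ‖cip (r k) (fun l => D l i) - chat k i‖ ≤ ε * S k := by
  intro k
  induction k with
  | zero =>
    intro i
    simp [hr 0, hc0, hchat0 i, hS 0]
  | succ k ih =>
    intro i
    set j := p (k + 1) with hj
    set a := chat k j with ha
    -- rewrite r (k+1)
    have hrk1 : r (k + 1) = fun l => r k l - a * D l j := by
      funext l
      simp only [hr, hcrec k, Matrix.mulVec_add]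
      have : D.mulVec (Pi.single j a) l = D l j * a := by
        simp [Matrix.mulVec, dotProduct, Pi.single_apply, mul_comm,
          Finset.sum_ite_eq']
      simp [this]
      ring
    have hcip : cip (r (k + 1)) (fun l => D l i)
        = cip (r k) (fun l => D l i) - a * G i j := by
      rw [hrk1, hG i j]
      simp only [cip, sub_mul, Finset.sum_sub_distrib, Finset.mul_sum]
      ring_nf
    have hkey : cip (r (k + 1)) (fun l => D l i) - chat (k + 1) i
        = (cip (r k) (fun l => D l i) - chat k i) - a * (G i j - Gε i j) := by
      rw [hcip, hchatrec k]
      ring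
    have hGdiff : ‖G i j - Gε i j‖ ≤ ε := by
      rw [hGε i j]
      split
      · simpa using hε.le
      · next h => simpa using le_of_not_gt h
    have hSk : S (k + 1) = S k + ‖a‖ := by
      rw [hS, hS, Finset.sum_range_succ]
    calc ‖cip (r (k + 1)) (fun l => D l i) - chat (k + 1) i‖
        ≤ ‖cip (r k) (fun l => D l i) - chat k i‖
          + ‖a‖ * ‖G i j - Gε i j‖ := by
          rw [hkey]
          refine (norm_sub_le _ _).trans ?_
          simp [map_mul]
      _ ≤ ε * S k + ‖a‖ * ε := by
          exact add_le_add (ih i)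
            (mul_le_mul_of_nonneg_left hGdiff (norm_nonneg _))
      _ = ε * S (k + 1) := by rw [hSk]; ring
end

section
/- Under these hypotheses the single approximate matching pursuit step contracts the residual energy by a definite factor: ‖r − c·d‖₂² ≤ (1 − ϵ'·|c|²/‖r‖₂²)·‖r‖₂². -/
open scoped BigOperators
open ComplexConjugate

/-- under the stated hypotheses, a single approximate matching pursuit
step contracts the residual energy by a definite factor:
`‖r − c·d‖₂² ≤ (1 − ϵ'·|c|²/‖r‖₂²)·‖r‖₂²`. -/
theorem approx_mp_step_contraction
    {L : ℕ} (hL : 0 < L) (r d : Fin L → ℂ) (hr : r ≠ 0) (hd : nrm d = 1)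
    (c : ℂ) (η δ ϵ' : ℝ) (hη : 0 ≤ η)
    (hδ0 : 0 < δ) (hδ : δ < 1 / 2)
    (hϵ'0 : 0 < ϵ') (hϵ' : ϵ' < 1 - 2 * δ)
    (hc : ‖cip r d - c‖ ≤ η)
    (hηc : η ≤ δ * ‖c‖)
    (hclarge : 2 * δ / (1 - (2 * δ + ϵ')) * nrm r ≤ ‖c‖) :
    nrm (r - c • d) ^ 2 ≤ (1 - ϵ' * ‖c‖ ^ 2 / nrm r ^ 2) * nrm r ^ 2 := by
  have hnr2 : ∀ u : Fin L → ℂ, nrm u ^ 2 = ∑ l, ‖u l‖ ^ 2 := by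
    intro u
    exact Real.sq_sqrt (Finset.sum_nonneg fun l _ => sq_nonneg _)
  have hrpos : 0 < nrm r ^ 2 := by
    rw [hnr2]
    obtain ⟨l, hl⟩ := Function.ne_iff.mp hr
    exact Finset.sum_pos' (fun i _ => by positivity)
      ⟨l, Finset.mem_univ l, pow_pos (norm_pos_iff.mpr hl) 2⟩
  have hd2 : ∑ l, ‖d l‖ ^ 2 = 1 := by
    have h := hnr2 d
    rw [hd] at h
    linarith
  have point : ∀ l, Complex.normSq (r l - c * d l)
      = Complex.normSq (r l) - 2 * (conj c * (r l * conj (d l))).re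
        + Complex.normSq c * Complex.normSq (d l) := by
    intro l
    simp only [Complex.normSq_apply, Complex.mul_re, Complex.mul_im, Complex.sub_re,
      Complex.sub_im, Complex.conj_re, Complex.conj_im]
    ring
  have expand : nrm (r - c • d) ^ 2
      = nrm r ^ 2 - 2 * (conj c * cip r d).re + ‖c‖ ^ 2 := by
    have hre : (conj c * cip r d).re = ∑ l, (conj c * (r l * conj (d l))).re := by
      rw [cip, Finset.mul_sum, Complex.re_sum]
    rw [hnr2, hnr2, hre]
    simp only [Complex.sq_norm, Pi.sub_apply, Pi.smul_apply, smul_eq_mul]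
    rw [Finset.sum_congr rfl (fun l _ => point l)]
    rw [Finset.sum_add_distrib, Finset.sum_sub_distrib, ← Finset.mul_sum, ← Finset.mul_sum]
    have : ∑ l, Complex.normSq (d l) = 1 := by
      rw [← hd2]; simp [Complex.sq_norm]
    rw [this]
    ring
  have hre_lb : (1 - δ) * ‖c‖ ^ 2 ≤ (conj c * cip r d).re := by
    have hsplit : conj c * cip r d = conj c * c + conj c * (cip r d - c) := by ring
    have h1 : (conj c * c).re = ‖c‖ ^ 2 := by
      rw [mul_comm, Complex.mul_conj, Complex.sq_norm]
      simp
    have h2 : ‖conj c * (cip r d - c)‖ ≤ ‖c‖ * η := by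
      rw [norm_mul, Complex.norm_conj]
      exact mul_le_mul_of_nonneg_left hc (norm_nonneg c)
    have h3 : -(‖c‖ * η) ≤ (conj c * (cip r d - c)).re := by
      have ha := Complex.abs_re_le_norm (conj c * (cip r d - c))
      have hb := neg_abs_le ((conj c * (cip r d - c)).re)
      linarith
    have habs : 0 ≤ ‖c‖ := norm_nonneg c
    have h4 : ‖c‖ * η ≤ δ * ‖c‖ ^ 2 := by
      nlinarith
    rw [hsplit, Complex.add_re, h1]
    linarith
  have hrhs : (1 - ϵ' * ‖c‖ ^ 2 / nrm r ^ 2) * nrm r ^ 2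
      = nrm r ^ 2 - ϵ' * ‖c‖ ^ 2 := by
    rw [sub_mul, one_mul, div_mul_cancel₀ _ hrpos.ne']
  rw [hrhs, expand]
  have habs2 : 0 ≤ ‖c‖ ^ 2 := by positivity
  nlinarith
end
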